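/- Fix α, β > 0, N ∈ ℕ, and K ∈ ℕ with K ≥ 1. If X_K ~ Beta(αβ/K, β) and, given X_K, the count n_K ~ Binomial(N, X_K), then P(n_K ≥ 1) = 1 − B(αβ/K, β + N)/B(αβ/K, β), and K · P(n_K ≥ 1) converges as K → ∞ to αβ · ∑_{j=0}^{N−1} 1/(β + j). -/

import Mathlib

open Filter

private lemma ofReal_beta_integrand {a b x : ℝ} (h0 : 0 ≤ x) (h1 : x ≤ 1) :
    ((x ^ (a - 1) * (1 - x) ^ (b - 1) : ℝ) : ℂ)
      = (x : ℂ) ^ ((a : ℂ) - 1) * ((1 : ℂ) - (x : ℂ)) ^ ((b : ℂ) - 1) := by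
  rw [Complex.ofReal_mul, Complex.ofReal_cpow h0,
    Complex.ofReal_cpow (by linarith : (0:ℝ) ≤ 1 - x)]
  push_cast
  ring_nf

private lemma betaReal_eq {a b : ℝ} (ha : 0 < a) (hb : 0 < b) :
    (∫ x in (0:ℝ)..1, x ^ (a - 1) * (1 - x) ^ (b - 1)) =
      Real.Gamma a * Real.Gamma b / Real.Gamma (a + b) := by
  have hcast : ((∫ x in (0:ℝ)..1, x ^ (a - 1) * (1 - x) ^ (b - 1) : ℝ) : ℂ)
      = Complex.betaIntegral a b := by
    rw [← intervalIntegral.integral_ofReal, Complex.betaIntegral]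
    apply intervalIntegral.integral_congr
    intro x hx
    rw [Set.uIcc_of_le (by norm_num : (0:ℝ) ≤ 1)] at hx
    exact ofReal_beta_integrand hx.1 hx.2
  have hG := Complex.Gamma_mul_Gamma_eq_betaIntegral (s := (a : ℂ)) (t := (b : ℂ))
    (by simpa using ha) (by simpa using hb)
  have hne : Complex.Gamma ((a : ℂ) + (b : ℂ)) ≠ 0 := by
    rw [← Complex.ofReal_add, Complex.Gamma_ofReal]
    exact_mod_cast (Real.Gamma_pos_of_pos (by linarith : (0:ℝ) < a + b)).ne'
  have hbeta : Complex.betaIntegral a b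
      = Complex.Gamma a * Complex.Gamma b / Complex.Gamma ((a : ℂ) + (b : ℂ)) := by
    rw [hG, mul_div_cancel_left₀ _ hne]
  rw [← Complex.ofReal_inj, hcast, hbeta, ← Complex.ofReal_add, Complex.Gamma_ofReal,
    Complex.Gamma_ofReal, Complex.Gamma_ofReal, Complex.ofReal_div, Complex.ofReal_mul]

private lemma betaIntegrable {a b : ℝ} (ha : 0 < a) (hb : 0 < b) :
    IntervalIntegrable (fun x => x ^ (a - 1) * (1 - x) ^ (b - 1))
      MeasureTheory.volume 0 1 := by
  have h := Complex.betaIntegral_convergent (u := (a : ℂ)) (v := (b : ℂ))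
    (by simpa using ha) (by simpa using hb)
  rw [intervalIntegrable_iff] at h ⊢
  have h2 : MeasureTheory.IntegrableOn
      (fun x : ℝ => ((x:ℂ) ^ ((a:ℂ) - 1) * ((1:ℂ) - x) ^ ((b:ℂ) - 1)).re)
      (Set.uIoc 0 1) MeasureTheory.volume := h.re
  apply h2.congr_fun ?_ measurableSet_uIoc
  intro x hx
  rw [Set.uIoc_of_le (by norm_num : (0:ℝ) ≤ 1)] at hx
  dsimp only
  rw [← ofReal_beta_integrand hx.1.le hx.2, Complex.ofReal_re]

private lemma Gamma_add_nat' {x : ℝ} (hx : 0 < x) (N : ℕ) :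
    Real.Gamma (x + N) = Real.Gamma x * ∏ j ∈ Finset.range N, (x + j) := by
  induction N with
  | zero => simp
  | succ n ih =>
    have hxn : x + (n : ℝ) ≠ 0 := by positivity
    have h : x + ((n + 1 : ℕ) : ℝ) = (x + n) + 1 := by push_cast; ring
    rw [h, Real.Gamma_add_one hxn, ih, Finset.prod_range_succ]
    push_cast
    ring

private lemma beta_ratio {a b : ℝ} (ha : 0 < a) (hb : 0 < b) (N : ℕ) :
    (∫ x in (0:ℝ)..1, x ^ (a - 1) * (1 - x) ^ (b + N - 1)) /
      (∫ x in (0:ℝ)..1, x ^ (a - 1) * (1 - x) ^ (b - 1))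
    = ∏ j ∈ Finset.range N, ((b + j) / (a + b + j)) := by
  have hbN : 0 < b + (N : ℝ) := by positivity
  rw [betaReal_eq ha hbN, betaReal_eq ha hb,
    show a + (b + (N : ℝ)) = (a + b) + N by ring, Gamma_add_nat' hb N,
    Gamma_add_nat' (show (0:ℝ) < a + b by positivity) N, Finset.prod_div_distrib]
  have hΓa := (Real.Gamma_pos_of_pos ha).ne'
  have hΓb := (Real.Gamma_pos_of_pos hb).ne'
  have hΓab := (Real.Gamma_pos_of_pos (show (0:ℝ) < a + b by positivity)).ne'
  have hp1 : (∏ j ∈ Finset.range N, (b + (j : ℝ))) ≠ 0 :=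
    (Finset.prod_pos (fun j _ => by positivity)).ne'
  have hp2 : (∏ j ∈ Finset.range N, (a + b + (j : ℝ))) ≠ 0 :=
    (Finset.prod_pos (fun j _ => by positivity)).ne'
  field_simp

/-- In the K-feature beta–binomial model, P(n_K ≥ 1) = 1 − B(αβ/K, β+N)/B(αβ/K, β)
and K·P(n_K ≥ 1) → αβ ∑_{j<N} 1/(β+j) as K → ∞. -/
theorem beta_binomial_seen_limit (α β : ℝ) (hα : 0 < α) (hβ : 0 < β) (N : ℕ)
    (B : ℝ → ℝ → ℝ)
    (hB : ∀ a b : ℝ, B a b = ∫ x in (0:ℝ)..1, x ^ (a - 1) * (1 - x) ^ (b - 1)) :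
    (∀ K : ℕ, 1 ≤ K →
      (∫ x in (0:ℝ)..1,
          (1 - (1 - x) ^ N) * (x ^ (α * β / K - 1) * (1 - x) ^ (β - 1) / B (α * β / K) β))
        = 1 - B (α * β / K) (β + N) / B (α * β / K) β) ∧
    Tendsto (fun K : ℕ => (K : ℝ) * (1 - B (α * β / K) (β + N) / B (α * β / K) β))
      atTop (nhds (α * β * ∑ j ∈ Finset.range N, 1 / (β + j))) := by
  have key : ∀ x : ℝ, 0 ≤ x → x ≤ 1 →
      ((1:ℝ) - x) ^ N * (1 - x) ^ (β - 1) = (1 - x) ^ (β + N - 1) := by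
    intro x h0 h1
    rcases eq_or_lt_of_le h1 with heq | hlt
    · subst heq
      simp only [sub_self]
      cases N with
      | zero => simp
      | succ m =>
        rw [zero_pow (Nat.succ_ne_zero m), zero_mul,
          Real.zero_rpow (by push_cast; linarith : β + ((m+1 : ℕ) : ℝ) - 1 ≠ 0)]
    · have h1x : (0:ℝ) < 1 - x := by linarith
      rw [← Real.rpow_natCast (1 - x) N, ← Real.rpow_add h1x]
      congr 1
      ring
  constructor
  · intro K hK
    have hK0 : (0:ℝ) < K := by exact_mod_cast hK
    have haK : 0 < α * β / K := by positivity
    have hbN : (0:ℝ) < β + N := by positivity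
    have hC : (0:ℝ) < B (α * β / K) β := by
      rw [hB]
      rw [betaReal_eq haK hβ]
      have := Real.Gamma_pos_of_pos haK
      have := Real.Gamma_pos_of_pos hβ
      have := Real.Gamma_pos_of_pos (show (0:ℝ) < α * β / K + β by positivity)
      positivity
    have step1 : (∫ x in (0:ℝ)..1,
          (1 - (1 - x) ^ N) * (x ^ (α * β / K - 1) * (1 - x) ^ (β - 1) / B (α * β / K) β))
        = ∫ x in (0:ℝ)..1,
          (x ^ (α * β / K - 1) * (1 - x) ^ (β - 1)
            - x ^ (α * β / K - 1) * (1 - x) ^ (β + N - 1)) / B (α * β / K) β := by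
      apply intervalIntegral.integral_congr
      intro x hx
      rw [Set.uIcc_of_le (by norm_num : (0:ℝ) ≤ 1)] at hx
      dsimp only
      rw [← key x hx.1 hx.2]
      ring
    rw [step1, intervalIntegral.integral_div,
      intervalIntegral.integral_sub (betaIntegrable haK hβ) (betaIntegrable haK hbN),
      ← hB, ← hB, sub_div, div_self hC.ne']
  · set S : ℝ := ∑ j ∈ Finset.range N, 1 / (β + j) with hS
    set Q : ℝ → ℝ := fun ε => ∏ j ∈ Finset.range N, ((β + j) / (ε + β + j)) with hQdef
    have hQ : ∀ ε : ℝ, 0 < ε → B ε (β + N) / B ε β = Q ε := by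
      intro ε hε
      rw [hB, hB]
      exact beta_ratio hε hβ N
    have hder : HasDerivAt Q (-S) 0 := by
      have h1 : ∀ j ∈ Finset.range N,
          HasDerivAt (fun ε : ℝ => (β + (j:ℝ)) / (ε + β + j)) (-(1 / (β + (j:ℝ)))) 0 := by
        intro j _
        have hbj : (0:ℝ) < β + j := by positivity
        have h0 : HasDerivAt (fun ε : ℝ => ε + β + (j:ℝ)) 1 0 := by
          simpa [add_assoc] using (hasDerivAt_id (0:ℝ)).add_const (β + (j:ℝ))
        have h2 := (hasDerivAt_const (0:ℝ) (β + (j:ℝ))).fun_div h0 (by positivity)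
        refine h2.congr_deriv ?_
        rw [zero_add]
        field_simp
        ring
      have h2 := HasDerivAt.fun_finsetProd h1
      have hval : (∑ j ∈ Finset.range N,
          (∏ i ∈ (Finset.range N).erase j, ((β + (i:ℝ)) / ((0:ℝ) + β + i)))
            • (-(1 / (β + (j:ℝ))))) = -S := by
        rw [hS, ← Finset.sum_neg_distrib]
        apply Finset.sum_congr rfl
        intro j hj
        rw [Finset.prod_congr rfl (fun i _ => by
          rw [zero_add, div_self (by positivity : β + (i:ℝ) ≠ 0)]),
          Finset.prod_const_one, smul_eq_mul, one_mul]
      rw [← hval]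
      exact h2
    have hQ0 : Q 0 = 1 := by
      rw [hQdef]
      apply Finset.prod_eq_one
      intro j _
      rw [zero_add, div_self (by positivity : β + (j:ℝ) ≠ 0)]
    have hslope := hasDerivAt_iff_tendsto_slope.mp hder
    have hε : Tendsto (fun K : ℕ => α * β / (K:ℝ)) atTop (nhdsWithin 0 {(0:ℝ)}ᶜ) := by
      apply tendsto_nhdsWithin_of_tendsto_nhds_of_eventually_within
      · exact tendsto_const_div_atTop_nhds_zero_nat (α * β)
      · filter_upwards [eventually_ge_atTop 1] with K hK
        have hK0 : (0:ℝ) < K := by exact_mod_cast hK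
        have : 0 < α * β / (K:ℝ) := by positivity
        exact this.ne' 
    have hcomp := hslope.comp hε
    have hfinal := (hcomp.neg.const_mul (α * β))
    rw [neg_neg] at hfinal
    apply Tendsto.congr' ?_ hfinal
    filter_upwards [eventually_ge_atTop 1] with K hK
    have hK0 : (0:ℝ) < K := by exact_mod_cast hK
    have hεK : 0 < α * β / (K:ℝ) := by positivity
    simp only [Function.comp_apply, slope_def_field, hQ _ hεK, hQ0, sub_zero]
    field_simp
    ring
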